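/- Let n ≥ 1, let f_0, …, f_n be n+1 polynomials in ℚ[x_0, …, x_{n-1}], let C be their Dixon cancellation matrix, and let d : {0,…,n-1} → ℕ be such that for every j and every k the degree of f_j in the variable x_k is at most d_k. Then for every k ∈ {0,…,n-1}, the degree of det C in the unbarred variable x_k is at most (k+1)·d_k. -/

import Mathlib

open MvPolynomial

/-- The `i`-th Dixon substitution homomorphism `φ_i : ℚ[x] → ℚ[x, x̄]`,
sending `x_k ↦ x̄_k` for `k < i` and `x_k ↦ x_k` for `k ≥ i`.
Here `Sum.inl k` is the unbarred variable `x_k` and `Sum.inr k` is the barred `x̄_k`. -/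
noncomputable def dixonPhi (n : ℕ) (i : Fin (n + 1)) :
    MvPolynomial (Fin n) ℚ →ₐ[ℚ] MvPolynomial (Fin n ⊕ Fin n) ℚ :=
  aeval (fun k : Fin n => if (k : ℕ) < (i : ℕ) then X (Sum.inr k) else X (Sum.inl k))

/-- The Dixon cancellation matrix of `f_0, …, f_n`, with entries `C i j = φ_i (f j)`. -/
noncomputable def dixonCancellationMatrix (n : ℕ)
    (f : Fin (n + 1) → MvPolynomial (Fin n) ℚ) :
    Matrix (Fin (n + 1)) (Fin (n + 1)) (MvPolynomial (Fin n ⊕ Fin n) ℚ) :=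
  fun i j => dixonPhi n i (f j)

/-- The substitution function underlying `dixonPhi`. -/
def dixonSub (n : ℕ) (i : Fin (n + 1)) : Fin n → Fin n ⊕ Fin n :=
  fun k => if (k : ℕ) < (i : ℕ) then Sum.inr k else Sum.inl k

lemma dixonSub_injective (n : ℕ) (i : Fin (n + 1)) : Function.Injective (dixonSub n i) := by
  intro a b hab
  unfold dixonSub at hab
  by_cases ha : (a : ℕ) < (i : ℕ) <;> by_cases hb : (b : ℕ) < (i : ℕ) <;>
    simp [ha, hb] at hab <;> exact hab

lemma dixonPhi_eq_rename (n : ℕ) (i : Fin (n + 1)) (p : MvPolynomial (Fin n) ℚ) :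
    dixonPhi n i p = rename (dixonSub n i) p := by
  have hfun : (fun k : Fin n => if (k : ℕ) < (i : ℕ) then
        (X (Sum.inr k) : MvPolynomial (Fin n ⊕ Fin n) ℚ) else X (Sum.inl k))
      = X ∘ dixonSub n i := by
    funext k
    by_cases h : (k : ℕ) < (i : ℕ) <;> simp [dixonSub, h]
  rw [dixonPhi, hfun, rename_eq_aeval]

lemma degreeOf_dixonPhi_le (n : ℕ) (i : Fin (n + 1)) (k : Fin n)
    (p : MvPolynomial (Fin n) ℚ) :
    degreeOf (Sum.inl k) (dixonPhi n i p)
      ≤ if (k : ℕ) < (i : ℕ) then 0 else degreeOf k p := by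
  rw [dixonPhi_eq_rename]
  by_cases h : (k : ℕ) < (i : ℕ)
  · simp only [h, if_true, Nat.le_zero]
    rw [degreeOf_def, degrees_rename_of_injective (dixonSub_injective n i),
      Multiset.count_eq_zero]
    intro hmem
    rcases Multiset.mem_map.1 hmem with ⟨a, -, ha⟩
    unfold dixonSub at ha
    by_cases ha' : (a : ℕ) < (i : ℕ) <;> simp [ha'] at ha
    exact absurd (ha ▸ h) (by omega)
  · have hk : dixonSub n i k = Sum.inl k := by simp [dixonSub, h]
    simp only [h, if_false]
    rw [← hk, degreeOf_rename_of_injective (dixonSub_injective n i)]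

/-- Degree bound in the unbarred variable `x_k` of the determinant of the
Dixon cancellation matrix: at most `(k+1)·d_k`. -/
theorem dixon_det_degreeOf_unbarred_le (n : ℕ) (hn : 1 ≤ n)
    (f : Fin (n + 1) → MvPolynomial (Fin n) ℚ) (d : Fin n → ℕ)
    (hd : ∀ j : Fin (n + 1), ∀ k : Fin n, degreeOf k (f j) ≤ d k) :
    ∀ k : Fin n,
      degreeOf (Sum.inl k) (dixonCancellationMatrix n f).det ≤ ((k : ℕ) + 1) * d k := by
  intro k
  classical
  rw [Matrix.det_apply]
  refine (degreeOf_sum_le _ _ _).trans ?_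
  rw [Finset.sup_le_iff]
  intro σ _
  have hsmul : degreeOf (Sum.inl k)
      (Equiv.Perm.sign σ • ∏ i, dixonCancellationMatrix n f (σ i) i)
      = degreeOf (Sum.inl k) (∏ i, dixonCancellationMatrix n f (σ i) i) := by
    rcases Int.units_eq_one_or (Equiv.Perm.sign σ) with h | h <;> rw [h]
    · rw [one_smul]
    · rw [Units.smul_def, Units.val_neg, Units.val_one, neg_smul, one_smul, degreeOf_neg]
  rw [hsmul]
  refine (degreeOf_prod_le _ _ _).trans ?_
  have hstep : ∀ i : Fin (n + 1),
      degreeOf (Sum.inl k) (dixonCancellationMatrix n f (σ i) i)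
        ≤ if ((σ i : Fin (n+1)) : ℕ) ≤ (k : ℕ) then d k else 0 := by
    intro i
    refine (degreeOf_dixonPhi_le n (σ i) k (f i)).trans ?_
    by_cases h : (k : ℕ) < ((σ i : Fin (n+1)) : ℕ)
    · simp [h, Nat.not_le.2 h]
    · simp only [h, if_false]
      rw [if_pos (Nat.not_lt.1 h)]
      exact hd i k
  refine (Finset.sum_le_sum fun i _ => hstep i).trans ?_
  rw [← Finset.sum_filter, Finset.sum_const, smul_eq_mul]
  have hkk : ((⟨(k : ℕ), by omega⟩ : Fin (n+1)) : ℕ) = (k : ℕ) := rfl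
  have hcard : (Finset.univ.filter fun i : Fin (n+1) => ((σ i : Fin (n+1)) : ℕ) ≤ (k : ℕ)).card
      = (k : ℕ) + 1 := by
    have hmap : (Finset.univ.filter fun i : Fin (n+1) => ((σ i : Fin (n+1)) : ℕ) ≤ (k : ℕ))
        = (Finset.univ.filter fun j : Fin (n+1) => (j : ℕ) ≤ (k : ℕ)).map
            σ.symm.toEmbedding := by
      ext i
      simp [Finset.mem_map_equiv]
    rw [hmap, Finset.card_map]
    have hIic : (Finset.univ.filter fun j : Fin (n+1) => (j : ℕ) ≤ (k : ℕ))
        = Finset.Iic (⟨(k : ℕ), by omega⟩ : Fin (n+1)) := by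
      ext j
      simp [Fin.le_def]
    rw [hIic, Fin.card_Iic]
  rw [hcard]
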